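/- Let G be a graph of maximum degree at most 3, and let c be a partial proper edge-coloring of G with colors {1,2,3} minimizing the number of uncolored edges. Then the uncolored edges form a matching, and the odd cycles corresponding to distinct uncolored edges (each uncolored edge e=(u,v) determines a maximal α–β Kempe alternating path from u which terminates at v, forming with e an odd cycle C_e) are pairwise vertex-disjoint. -/

import Mathlib

open scoped Classical

/-- A finite undirected multigraph (possibly with loops and parallel edges),
given by a vertex type, an edge type, and an endpoints map. -/
structure Multigraph where
  V : Type
  E : Type
  [fintV : Fintype V]
  [fintE : Fintype E]
  [decV : DecidableEq V]
  [decE : DecidableEq E]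
  ends : E → Sym2 V

namespace Multigraph

attribute [instance] Multigraph.fintV Multigraph.fintE Multigraph.decV Multigraph.decE

variable (G : Multigraph)

/-- The number of times `v` occurs as an endpoint of `e` (2 for a loop at `v`). -/
def incCount (v : G.V) (e : G.E) : ℕ :=
  if G.ends e = Sym2.diag v then 2 else if v ∈ G.ends e then 1 else 0

/-- Degree of a vertex (a loop contributes 2). -/
def degree (v : G.V) : ℕ := ∑ e : G.E, G.incCount v e

/-- The set `∂_G(v)` of edges incident to `v`. -/
def star (v : G.V) : Finset G.E := Finset.univ.filter fun e => v ∈ G.ends e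

/-- No loops. -/
def Loopless : Prop := ∀ e : G.E, ¬ (G.ends e).IsDiag

/-- A cubic graph: loopless and 3-regular (parallel edges allowed). -/
def Cubic : Prop := G.Loopless ∧ ∀ v : G.V, G.degree v = 3

/-- A cubic pseudo-graph: 3-regular, loops and parallel edges allowed. -/
def CubicPseudo : Prop := ∀ v : G.V, G.degree v = 3

/-- A simple graph: no loops and no parallel edges. -/
def Simple : Prop := G.Loopless ∧ ∀ e e' : G.E, G.ends e = G.ends e' → e = e'

/-- Two edges are adjacent if they are distinct and share an endpoint. -/
def EdgeAdj (e e' : G.E) : Prop :=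
  e ≠ e' ∧ ∃ v : G.V, v ∈ G.ends e ∧ v ∈ G.ends e'

/-- A matching: a set of pairwise non-adjacent edges. -/
def IsMatching (M : Set G.E) : Prop :=
  ∀ e ∈ M, ∀ e' ∈ M, e ≠ e' → ¬ ∃ v : G.V, v ∈ G.ends e ∧ v ∈ G.ends e'

/-- A perfect matching: a matching covering every vertex. -/
def IsPerfectMatching (M : Set G.E) : Prop :=
  G.IsMatching M ∧ ∀ v : G.V, ∃ e ∈ M, v ∈ G.ends e

/-- Degree of `v` within the spanning subgraph with edge set `A`. -/
noncomputable def degIn (A : Set G.E) (v : G.V) : ℕ :=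
  ∑ e : G.E, if e ∈ A then G.incCount v e else 0

/-- `A` is the edge set of a `k`-factor: a spanning `k`-regular subgraph. -/
def IsKFactor (k : ℕ) (A : Set G.E) : Prop := ∀ v : G.V, G.degIn A v = k

/-- `A` is the edge set of an even subgraph. -/
def EvenSubgraph (A : Set G.E) : Prop := ∀ v : G.V, Even (G.degIn A v)

/-- Reachability using only edges from `A`. -/
def Reach (A : Set G.E) : G.V → G.V → Prop :=
  Relation.ReflTransGen fun a b => ∃ e ∈ A, G.ends e = s(a, b)

/-- Connectedness. -/
def Connected : Prop := ∀ u v : G.V, G.Reach Set.univ u v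

/-- A bridge: an edge whose removal disconnects its endpoints. -/
def IsBridge (e : G.E) : Prop :=
  ∀ u w : G.V, G.ends e = s(u, w) → ¬ G.Reach {e' | e' ≠ e} u w

/-- The chromatic index: least number of colors of a proper edge coloring. -/
noncomputable def chromaticIndex : ℕ :=
  sInf {n | ∃ c : G.E → Fin n, ∀ e e', G.EdgeAdj e e' → c e ≠ c e'}

/-- A triangle on distinct vertices `u, v, w` with edges `e₁, e₂, e₃`. -/
def IsTriangle (e₁ e₂ e₃ : G.E) (u v w : G.V) : Prop :=
  u ≠ v ∧ v ≠ w ∧ u ≠ w ∧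
    G.ends e₁ = s(u, v) ∧ G.ends e₂ = s(v, w) ∧ G.ends e₃ = s(u, w)

/-- Triangle-freeness. -/
def TriangleFree : Prop :=
  ¬ ∃ (e₁ e₂ e₃ : G.E) (u v w : G.V), G.IsTriangle e₁ e₂ e₃ u v w

/-- An isomorphism of multigraphs. -/
structure Iso (G H : Multigraph) where
  vEquiv : G.V ≃ H.V
  eEquiv : G.E ≃ H.E
  ends_map : ∀ e : G.E, H.ends (eEquiv e) = (G.ends e).map vEquiv

/-- `G` and `H` are isomorphic. -/
def IsIsomorphicTo (G H : Multigraph) : Prop := Nonempty (Iso G H)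

/-- An `H`-coloring of `G`: `f(∂_G(x)) = ∂_H(y)` for every vertex `x` of `G`,
some vertex `y` of `H`. -/
def IsHColoring (G H : Multigraph) (f : G.E → H.E) : Prop :=
  ∀ x : G.V, ∃ y : H.V, (G.star x).image f = H.star y

/-- The set `V(f)` of vertices of `G` satisfying the `H`-coloring condition under `f`. -/
def colVerts (G H : Multigraph) (f : G.E → H.E) : Set G.V :=
  {x : G.V | ∃ y : H.V, (G.star x).image f = H.star y}

/-- The incidence multiset of a vertex: each incident edge with its multiplicity
(a loop occurs twice). -/
noncomputable def incMultiset (v : G.V) : Multiset G.E :=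
  ∑ e : G.E, (G.incCount v e) • ({e} : Multiset G.E)

end Multigraph

/-- The Petersen graph. -/
def Petersen : Multigraph where
  V := Fin 10
  E := {p : Sym2 (Fin 10) //
    p ∈ ({s(0,1), s(1,2), s(2,3), s(3,4), s(4,0),
          s(0,5), s(1,6), s(2,7), s(3,8), s(4,9),
          s(5,7), s(7,9), s(9,6), s(6,8), s(8,5)} : Finset (Sym2 (Fin 10)))}
  ends := Subtype.val

/-- The Sylvester graph `S` on 10 vertices: a central vertex 0 joined by three
bridges to three end-blocks; each end-block is a 3-vertex multigraph whose two
non-root vertices are joined by a pair of parallel edges. -/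
def SylvesterS : Multigraph where
  V := Fin 10
  E := Fin 15
  ends := ![s(0,1), s(1,2), s(1,3), s(2,3), s(2,3),
            s(0,4), s(4,5), s(4,6), s(5,6), s(5,6),
            s(0,7), s(7,8), s(7,9), s(8,9), s(8,9)]

/-- The Sylvester simple graph `S₁₆` on 16 vertices: central vertex 0 joined by
bridges to three 5-vertex end-blocks with edges
(v1,v2),(v1,v3),(v1,v4),(v2,v3),(v2,v4),(v3,v5),(v4,v5). -/
def Sylvester16 : Multigraph where
  V := Fin 16
  E := {p : Sym2 (Fin 16) //
    p ∈ ({s(1,2), s(1,3), s(1,4), s(2,3), s(2,4), s(3,5), s(4,5), s(0,5),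
          s(6,7), s(6,8), s(6,9), s(7,8), s(7,9), s(8,10), s(9,10), s(0,10),
          s(11,12), s(11,13), s(11,14), s(12,13), s(12,14), s(13,15), s(14,15),
          s(0,15)} : Finset (Sym2 (Fin 16)))}
  ends := Subtype.val

/-- The graph `S'` on 10 vertices: two 5-vertex blocks, each consisting of a
triangle v1v2v3 together with edges (v1,v4),(v2,v4),(v3,v5),(v4,v5), joined by
a bridge between the two degree-2 vertices. -/
def Sprime : Multigraph where
  V := Fin 10
  E := {p : Sym2 (Fin 10) //
    p ∈ ({s(0,1), s(0,2), s(1,2), s(0,3), s(1,3), s(2,4), s(3,4),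
          s(5,6), s(5,7), s(6,7), s(5,8), s(6,8), s(7,9), s(8,9),
          s(4,9)} : Finset (Sym2 (Fin 10)))}
  ends := Subtype.val

/-- The Sylvester pseudo-graph `S₄` on 4 vertices: a central vertex 0 joined to
vertices 1, 2, 3 (edges `a = 0`, `b = 1`, `c = 2`), each of which carries a loop
(`a' = 3`, `b' = 4`, `c' = 5`). -/
def S4 : Multigraph where
  V := Fin 4
  E := Fin 6
  ends := ![s(0,1), s(0,2), s(0,3), s(1,1), s(2,2), s(3,3)]


namespace Multigraph

variable (G : Multigraph)

/-- A proper partial edge coloring with colors {1,2,3} (`none` = uncolored):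
adjacent colored edges receive different colors. -/
def ProperPartial (c : G.E → Option (Fin 3)) : Prop :=
  ∀ e e', G.EdgeAdj e e' → ∀ a : Fin 3, c e = some a → c e' ≠ some a

/-- The uncolored edges of a partial coloring. -/
def uncolored (c : G.E → Option (Fin 3)) : Set G.E := {e | c e = none}

/-- A cycle of length `n ≥ 3`, given by `n`-periodic vertex and edge sequences
(vertices pairwise distinct within a period). -/
def IsCycleSeq (n : ℕ) (p : ℕ → G.V) (q : ℕ → G.E) : Prop :=
  3 ≤ n ∧ (∀ i j, i < n → j < n → p i = p j → i = j) ∧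
    (∀ i, p (i + n) = p i) ∧ (∀ i, q (i + n) = q i) ∧
    ∀ i, G.ends (q i) = s(p i, p (i + 1))

/-- The odd cycle `C_e` corresponding to an uncolored edge `e = q 0`: the other
edges form a maximal α–β Kempe alternating path from `p 1` terminating at
`p 0` (β missing at the start vertex, α missing at the end vertex). -/
def IsKempeCycle (c : G.E → Option (Fin 3)) (e : G.E) (n : ℕ)
    (p : ℕ → G.V) (q : ℕ → G.E) (α β : Fin 3) : Prop :=
  G.IsCycleSeq n p q ∧ Odd n ∧ q 0 = e ∧ c e = none ∧ α ≠ β ∧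
    (∀ i, 1 ≤ i → i < n → c (q i) = some (if i % 2 = 1 then α else β)) ∧
    (∀ g : G.E, p 1 ∈ G.ends g → c g ≠ some β) ∧
    (∀ g : G.E, p 0 ∈ G.ends g → c g ≠ some α)

end Multigraph

namespace Multigraph

section Aux

variable {G : Multigraph}

lemma aux_incCount_pos {v : G.V} {e : G.E} (h : v ∈ G.ends e) : 1 ≤ G.incCount v e := by
  unfold incCount
  split
  · omega
  · simp [h]

lemma aux_card_le_degree (x : G.V) (s : Finset G.E) (hs : ∀ e ∈ s, x ∈ G.ends e) :
    s.card ≤ G.degree x := by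
  have h1 : s.card = ∑ e ∈ s, 1 := by simp
  have h2 : ∑ e ∈ s, 1 ≤ ∑ e ∈ s, G.incCount x e :=
    Finset.sum_le_sum fun e he => aux_incCount_pos (hs e he)
  have h3 : ∑ e ∈ s, G.incCount x e ≤ ∑ e : G.E, G.incCount x e :=
    Finset.sum_le_sum_of_subset (Finset.subset_univ s)
  unfold degree
  omega

lemma aux_four (hdeg : ∀ v : G.V, G.degree v ≤ 3) (x : G.V) {a b c d : G.E}
    (hab : a ≠ b) (hac : a ≠ c) (had : a ≠ d) (hbc : b ≠ c) (hbd : b ≠ d) (hcd : c ≠ d)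
    (ha : x ∈ G.ends a) (hb : x ∈ G.ends b) (hc : x ∈ G.ends c) (hd : x ∈ G.ends d) :
    False := by
  have hcard : ({a, b, c, d} : Finset G.E).card = 4 := by
    rw [Finset.card_insert_of_notMem (by simp [hab, hac, had]),
        Finset.card_insert_of_notMem (by simp [hbc, hbd]),
        Finset.card_insert_of_notMem (by simp [hcd]), Finset.card_singleton]
  have h1 := aux_card_le_degree x ({a, b, c, d} : Finset G.E) (by
    intro e he
    simp only [Finset.mem_insert, Finset.mem_singleton] at he
    rcases he with rfl | rfl | rfl | rfl <;> assumption)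
  have h2 := hdeg x
  omega

lemma aux_adj_symm {e e' : G.E} (h : G.EdgeAdj e e') : G.EdgeAdj e' e :=
  ⟨h.1.symm, h.2.imp fun _ hv => ⟨hv.2, hv.1⟩⟩

lemma aux_color_unique {c : G.E → Option (Fin 3)} (hc : G.ProperPartial c) {x : G.V} {γ : Fin 3}
    {e e' : G.E} (he : x ∈ G.ends e) (he' : x ∈ G.ends e') (hce : c e = some γ)
    (hce' : c e' = some γ) : e = e' := by
  by_contra hne
  exact hc e e' ⟨hne, x, he, he'⟩ γ hce hce'

lemma aux_proper_update_none {c : G.E → Option (Fin 3)} (hc : G.ProperPartial c) (g : G.E) :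
    G.ProperPartial (Function.update c g none) := by
  intro e e' hadj a he
  by_cases h1 : e = g
  · subst h1; simp [Function.update_self] at he
  · rw [Function.update_of_ne h1] at he
    by_cases h2 : e' = g
    · subst h2; simp
    · rw [Function.update_of_ne h2]; exact hc e e' hadj a he

lemma aux_proper_update_some {c : G.E → Option (Fin 3)} (hc : G.ProperPartial c) {g : G.E}
    {γ : Fin 3} (hg : ∀ g', G.EdgeAdj g g' → c g' ≠ some γ) :
    G.ProperPartial (Function.update c g (some γ)) := by
  intro e e' hadj a he
  by_cases h1 : e = g
  · subst h1
    rw [Function.update_self] at he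
    rw [Function.update_of_ne (Ne.symm hadj.1)]
    have ha : γ = a := Option.some.inj he
    subst ha
    exact hg e' hadj
  · rw [Function.update_of_ne h1] at he
    by_cases h2 : e' = g
    · subst h2
      rw [Function.update_self]
      intro hcon
      have : γ = a := Option.some.inj hcon
      subst this
      exact hg e (aux_adj_symm hadj) he
    · rw [Function.update_of_ne h2]; exact hc e e' hadj a he

lemma aux_mem_uncolored {c : G.E → Option (Fin 3)} {e : G.E} :
    e ∈ G.uncolored c ↔ c e = none := Iff.rfl

lemma aux_ncard_swap {U : Set G.E} {x y : G.E} (hy : y ∈ U) (hx : x ∉ U) :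
    (insert x (U \ {y})).ncard = U.ncard := by
  rw [Set.ncard_insert_of_notMem (fun h => hx h.1) ((U \ {y}).toFinite),
      Set.ncard_diff_singleton_add_one hy U.toFinite]

end Aux

end Multigraph
namespace Multigraph

def swapc (γ₁ γ₂ : Fin 3) : Option (Fin 3) → Option (Fin 3)
  | none => none
  | some γ => some (if γ = γ₁ then γ₂ else if γ = γ₂ then γ₁ else γ)

lemma swapc_invol : ∀ (γ₁ γ₂ : Fin 3) (o : Option (Fin 3)),
    swapc γ₁ γ₂ (swapc γ₁ γ₂ o) = o := by decide

lemma swapc_inj {γ₁ γ₂ : Fin 3} {o o' : Option (Fin 3)}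
    (h : swapc γ₁ γ₂ o = swapc γ₁ γ₂ o') : o = o' := by
  rw [← swapc_invol γ₁ γ₂ o, h, swapc_invol]

lemma swapc_none_iff {γ₁ γ₂ : Fin 3} {o : Option (Fin 3)} :
    swapc γ₁ γ₂ o = none ↔ o = none := by
  cases o <;> simp [swapc]

lemma swapc_mem : ∀ (γ₁ γ₂ δ a : Fin 3), swapc γ₁ γ₂ (some δ) = some a →
    (δ = γ₁ ∨ δ = γ₂) → (a = γ₁ ∨ a = γ₂) := by decide

section Aux2

variable {G : Multigraph}

lemma aux_swap_proper {c : G.E → Option (Fin 3)} (hc : G.ProperPartial c) (γ₁ γ₂ : Fin 3)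
    (K : Set G.E)
    (hKD : ∀ g ∈ K, c g = some γ₁ ∨ c g = some γ₂)
    (hKcl : ∀ g ∈ K, ∀ g', G.EdgeAdj g g' → (c g' = some γ₁ ∨ c g' = some γ₂) → g' ∈ K) :
    ∃ c' : G.E → Option (Fin 3), G.ProperPartial c' ∧ G.uncolored c' = G.uncolored c ∧
      (∀ g ∈ K, c' g = swapc γ₁ γ₂ (c g)) ∧ (∀ g ∉ K, c' g = c g) := by
  classical
  refine ⟨fun g => if g ∈ K then swapc γ₁ γ₂ (c g) else c g, ?_, ?_,
    fun g hg => if_pos hg, fun g hg => if_neg hg⟩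
  · intro e e' hadj a he he'
    simp only at he he'
    by_cases h1 : e ∈ K <;> by_cases h2 : e' ∈ K <;>
      simp only [h1, h2, if_pos, if_neg, if_true, if_false] at he he'
    · -- both in K
      have hee : c e = c e' := swapc_inj (he.trans he'.symm)
      rcases hKD e h1 with h | h
      · exact hc e e' hadj γ₁ h (hee ▸ h)
      · exact hc e e' hadj γ₂ h (hee ▸ h)
    · -- e ∈ K, e' ∉ K
      have hm : a = γ₁ ∨ a = γ₂ := by
        rcases hKD e h1 with h | h
        · exact swapc_mem γ₁ γ₂ γ₁ a (h ▸ he) (Or.inl rfl)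
        · exact swapc_mem γ₁ γ₂ γ₂ a (h ▸ he) (Or.inr rfl)
      apply h2
      apply hKcl e h1 e' hadj
      rcases hm with rfl | rfl
      · exact Or.inl he'
      · exact Or.inr he'
    · -- e ∉ K, e' ∈ K
      have hm : a = γ₁ ∨ a = γ₂ := by
        rcases hKD e' h2 with h | h
        · exact swapc_mem γ₁ γ₂ γ₁ a (h ▸ he') (Or.inl rfl)
        · exact swapc_mem γ₁ γ₂ γ₂ a (h ▸ he') (Or.inr rfl)
      apply h1
      apply hKcl e' h2 e (aux_adj_symm hadj)
      rcases hm with rfl | rfl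
      · exact Or.inl he
      · exact Or.inr he
    · exact hc e e' hadj a he he'
  · ext g
    simp only [uncolored, Set.mem_setOf_eq]
    by_cases h : g ∈ K
    · simp only [h, if_true]
      exact swapc_none_iff
    · simp only [h, if_false]

end Aux2

end Multigraph
namespace Multigraph

def aux_D {G : Multigraph} (c : G.E → Option (Fin 3)) (δ₁ δ₂ : Fin 3) (g : G.E) : Prop :=
  c g = some δ₁ ∨ c g = some δ₂

def aux_rel (G : Multigraph) (c : G.E → Option (Fin 3)) (δ₁ δ₂ : Fin 3) (g g' : G.E) : Prop :=
  aux_D c δ₁ δ₂ g ∧ aux_D c δ₁ δ₂ g' ∧ G.EdgeAdj g g'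

lemma aux_rel_symm {G : Multigraph} {c : G.E → Option (Fin 3)} {δ₁ δ₂ : Fin 3} :
    Symmetric (aux_rel G c δ₁ δ₂) := fun _ _ h => ⟨h.2.1, h.1, aux_adj_symm h.2.2⟩

noncomputable def trailStep (G : Multigraph) (c : G.E → Option (Fin 3)) (δ₁ δ₂ : Fin 3)
    (st : Option (G.E × G.V)) : Option (G.E × G.V) :=
  match st with
  | none => none
  | some (g, x) =>
    if h : ∃ g', aux_D c δ₁ δ₂ g' ∧ g' ≠ g ∧ x ∈ G.ends g' then
      some (h.choose, if hm : x ∈ G.ends h.choose then Sym2.Mem.other' hm else x)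
    else none

section Trail

variable {G : Multigraph} {c : G.E → Option (Fin 3)} {δ₁ δ₂ : Fin 3}

lemma aux_two_unique (hc : G.ProperPartial c) {x : G.V} {g g₁ g₂ : G.E}
    (hg : aux_D c δ₁ δ₂ g) (h1 : aux_D c δ₁ δ₂ g₁) (h2 : aux_D c δ₁ δ₂ g₂)
    (hx : x ∈ G.ends g) (hx1 : x ∈ G.ends g₁) (hx2 : x ∈ G.ends g₂)
    (hne1 : g₁ ≠ g) (hne2 : g₂ ≠ g) : g₁ = g₂ := by
  by_contra hne
  rcases hg with h | h <;> rcases h1 with ha | ha <;> rcases h2 with hb | hb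
  · exact hc g g₁ ⟨hne1.symm, x, hx, hx1⟩ δ₁ h ha
  · exact hc g g₁ ⟨hne1.symm, x, hx, hx1⟩ δ₁ h ha
  · exact hc g g₂ ⟨hne2.symm, x, hx, hx2⟩ δ₁ h hb
  · exact hc g₁ g₂ ⟨hne, x, hx1, hx2⟩ δ₂ ha hb
  · exact hc g₁ g₂ ⟨hne, x, hx1, hx2⟩ δ₁ ha hb
  · exact hc g g₂ ⟨hne2.symm, x, hx, hx2⟩ δ₂ h hb
  · exact hc g g₁ ⟨hne1.symm, x, hx, hx1⟩ δ₂ h ha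
  · exact hc g g₁ ⟨hne1.symm, x, hx, hx1⟩ δ₂ h ha

lemma trailStep_some_def (g : G.E) (x : G.V) :
    trailStep G c δ₁ δ₂ (some (g, x)) =
      if h : ∃ g', aux_D c δ₁ δ₂ g' ∧ g' ≠ g ∧ x ∈ G.ends g' then
        some (h.choose, if hm : x ∈ G.ends h.choose then Sym2.Mem.other' hm else x)
      else none := rfl

lemma trailStep_eq_some {g : G.E} {x : G.V} {g' : G.E} {x' : G.V}
    (h : trailStep G c δ₁ δ₂ (some (g, x)) = some (g', x')) :
    aux_D c δ₁ δ₂ g' ∧ g' ≠ g ∧ G.ends g' = s(x, x') := by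
  rw [trailStep_some_def] at h
  split at h
  case isTrue hex =>
    have h' := Option.some.inj h
    have hg' : hex.choose = g' := congrArg Prod.fst h'
    have hx' : (if hm : x ∈ G.ends hex.choose then Sym2.Mem.other' hm else x) = x' :=
      congrArg Prod.snd h'
    obtain ⟨hD, hne, hmem⟩ := hex.choose_spec
    subst hg'
    rw [dif_pos hmem] at hx'
    refine ⟨hD, hne, ?_⟩
    rw [← hx']
    exact (Sym2.other_spec' hmem).symm
  case isFalse => exact absurd h (by simp)

lemma trailStep_exists {g : G.E} {x : G.V} (g'' : G.E) (hD : aux_D c δ₁ δ₂ g'')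
    (hne : g'' ≠ g) (hmem : x ∈ G.ends g'') :
    ∃ g' x', trailStep G c δ₁ δ₂ (some (g, x)) = some (g', x') := by
  rw [trailStep_some_def, dif_pos ⟨g'', hD, hne, hmem⟩]
  exact ⟨_, _, rfl⟩

lemma trailStep_not_exists {g : G.E} {x : G.V}
    (h : ¬ ∃ g', aux_D c δ₁ δ₂ g' ∧ g' ≠ g ∧ x ∈ G.ends g') :
    trailStep G c δ₁ δ₂ (some (g, x)) = none := by
  rw [trailStep_some_def, dif_neg h]

lemma aux_trail (hc : G.ProperPartial c) (hδ : δ₁ ≠ δ₂)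
    (u v w : G.V) (huv : u ≠ v) (huw : u ≠ w) (hvw : v ≠ w)
    (a b d : G.E)
    (hca : c a = some δ₁) (hcb : c b = some δ₂) (hcd : c d = some δ₁)
    (hua : u ∈ G.ends a) (hvb : v ∈ G.ends b) (hwd : w ∈ G.ends d)
    (hu1 : ∀ g, aux_D c δ₁ δ₂ g → u ∈ G.ends g → g = a)
    (hv1 : ∀ g, aux_D c δ₁ δ₂ g → v ∈ G.ends g → g = b)
    (hw1 : ∀ g, aux_D c δ₁ δ₂ g → w ∈ G.ends g → g = d)
    (hreachb : Relation.ReflTransGen (aux_rel G c δ₁ δ₂) a b)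
    (hreachd : Relation.ReflTransGen (aux_rel G c δ₁ δ₂) a d) : False := by
  set ya := Sym2.Mem.other' hua with hya
  have hendsa : G.ends a = s(u, ya) := (Sym2.other_spec' hua).symm
  set tr : ℕ → Option (G.E × G.V) := fun k => (trailStep G c δ₁ δ₂)^[k] (some (a, ya)) with htr
  have htr0 : tr 0 = some (a, ya) := rfl
  have htrS : ∀ k, tr (k + 1) = trailStep G c δ₁ δ₂ (tr k) := by
    intro k
    simp only [htr, Function.iterate_succ_apply']
  -- invariant
  have hInv : ∀ k g x, tr k = some (g, x) → aux_D c δ₁ δ₂ g ∧ x ∈ G.ends g := by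
    intro k
    induction k with
    | zero =>
      intro g x h
      rw [htr0] at h
      have h' := Option.some.inj h
      have h1 : a = g := congrArg Prod.fst h'
      have h2 : ya = x := congrArg Prod.snd h'
      subst h1; subst h2
      exact ⟨Or.inl hca, by rw [hendsa, Sym2.mem_iff]; tauto⟩
    | succ k ih =>
      intro g x h
      rw [htrS k] at h
      cases htk : tr k with
      | none => rw [htk] at h; exact absurd h (by simp [trailStep])
      | some st =>
        obtain ⟨g₀, x₀⟩ := st
        rw [htk] at h
        obtain ⟨hD, hne, hends⟩ := trailStep_eq_some h
        exact ⟨hD, by rw [hends, Sym2.mem_iff]; tauto⟩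
  have hPrev : ∀ k g x, tr (k + 1) = some (g, x) →
      ∃ g₀ x₀, tr k = some (g₀, x₀) ∧ g ≠ g₀ ∧ G.ends g = s(x₀, x) := by
    intro k g x h
    rw [htrS k] at h
    cases htk : tr k with
    | none => rw [htk] at h; exact absurd h (by simp [trailStep])
    | some st =>
      obtain ⟨g₀, x₀⟩ := st
      rw [htk] at h
      obtain ⟨hD, hne, hends⟩ := trailStep_eq_some h
      exact ⟨g₀, x₀, rfl, hne, hends⟩
  -- coverage
  have hCov : ∀ g, Relation.ReflTransGen (aux_rel G c δ₁ δ₂) a g → ∃ k x, tr k = some (g, x) := by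
    intro g hg
    induction hg with
    | refl => exact ⟨0, ya, htr0⟩
    | @tail bb g' hab hbc ih =>
      obtain ⟨k, x, hk⟩ := ih
      obtain ⟨hDb, hDg', hne, z, hz1, hz2⟩ := hbc
      have hxb : x ∈ G.ends bb := (hInv k bb x hk).2
      by_cases hzx : z = x
      · subst hzx
        obtain ⟨g₃, x₃, h3⟩ := trailStep_exists g' hDg' (Ne.symm hne) hz2
        have h3' : tr (k + 1) = some (g₃, x₃) := by rw [htrS k, hk]; exact h3
        obtain ⟨hD3, hne3, hends3⟩ := trailStep_eq_some h3
        have : g₃ = g' := by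
          refine aux_two_unique hc (hInv k bb z hk).1 hD3 hDg' hz1 ?_ hz2 hne3 (Ne.symm hne)
          rw [hends3, Sym2.mem_iff]; tauto
        exact ⟨k + 1, x₃, by rw [h3', this]⟩
      · cases k with
        | zero =>
          rw [htr0] at hk
          have h' := Option.some.inj hk
          have h1 : a = bb := congrArg Prod.fst h'
          have h2 : ya = x := congrArg Prod.snd h'
          have hz' : z ∈ G.ends a := h1 ▸ hz1
          rw [hendsa, Sym2.mem_iff] at hz'
          rcases hz' with rfl | rfl
          · exact absurd ((hu1 g' hDg' hz2).trans h1) (Ne.symm hne)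
          · exact absurd h2 (fun hh => hzx hh)
        | succ kk =>
          obtain ⟨g₀, x₀, hk0, hbne, hend⟩ := hPrev kk bb x hk
          have hz' : z ∈ G.ends bb := hz1
          rw [hend, Sym2.mem_iff] at hz'
          rcases hz' with rfl | rfl
          · -- z = x₀ : g' is the previous edge
            have hInv0 := hInv kk g₀ z hk0
            have : g' = g₀ := by
              refine aux_two_unique hc hDb hDg' hInv0.1 ?_ hz2 hInv0.2 (Ne.symm hne) (fun hh => hbne hh.symm)
              rw [hend, Sym2.mem_iff]; tauto
            exact ⟨kk, z, by rw [hk0, this]⟩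
          · exact absurd rfl hzx
  -- none is absorbing
  have hNone : ∀ k j, tr k = none → tr (k + j) = none := by
    intro k j h
    induction j with
    | zero => exact h
    | succ j ih => rw [← Nat.add_assoc, htrS (k + j), ih]; rfl
  -- stopping
  have hStop : ∀ (e0 : G.E) (v0 : G.V), (∀ g, aux_D c δ₁ δ₂ g → v0 ∈ G.ends g → g = e0) →
      v0 ∈ G.ends e0 → v0 ≠ u → ∀ m xm, tr m = some (e0, xm) → tr (m + 1) = none := by
    intro e0 v0 hv0uniq hv0mem hv0u m xm hm
    have hxm : xm = v0 := by
      cases m with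
      | zero =>
        rw [htr0] at hm
        have h' := Option.some.inj hm
        have h1 : a = e0 := congrArg Prod.fst h'
        have h2 : ya = xm := congrArg Prod.snd h'
        have : v0 ∈ G.ends a := h1 ▸ hv0mem
        rw [hendsa, Sym2.mem_iff] at this
        rcases this with rfl | rfl
        · exact absurd rfl hv0u
        · exact h2.symm
      | succ mm =>
        obtain ⟨g₀, x₀, hk0, hbne, hend⟩ := hPrev mm e0 xm hm
        have : v0 ∈ G.ends e0 := hv0mem
        rw [hend, Sym2.mem_iff] at this
        rcases this with rfl | rfl
        · have hInv0 := hInv mm g₀ v0 hk0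
          exact absurd (hv0uniq g₀ hInv0.1 hInv0.2) (fun hh => hbne hh.symm)
        · rfl
    subst hxm
    rw [htrS m, hm]
    apply trailStep_not_exists
    rintro ⟨g', hD', hne', hmem'⟩
    exact hne' (hv0uniq g' hD' hmem')
  obtain ⟨mb, xb, hmb⟩ := hCov b hreachb
  obtain ⟨md, xd, hmd⟩ := hCov d hreachd
  have sb := hStop b v hv1 hvb (Ne.symm huv) mb xb hmb
  have sd := hStop d w hw1 hwd (Ne.symm huw) md xd hmd
  rcases Nat.lt_trichotomy mb md with hlt | heq | hlt
  · have : tr md = none := by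
      have : md = (mb + 1) + (md - (mb + 1)) := by omega
      rw [this]; exact hNone _ _ sb
    rw [this] at hmd; exact absurd hmd (by simp)
  · subst heq
    have hbd : b = d := congrArg Prod.fst (Option.some.inj (hmb.symm.trans hmd))
    rw [hbd] at hcb
    exact hδ (Option.some.inj (hcd.symm.trans hcb))
  · have : tr mb = none := by
      have : mb = (md + 1) + (mb - (md + 1)) := by omega
      rw [this]; exact hNone _ _ sd
    rw [this] at hmb; exact absurd hmb (by simp)

end Trail

end Multigraph
namespace Multigraph

section Part1

variable {G : Multigraph}

lemma aux_uncolored_update_some {c : G.E → Option (Fin 3)} {e : G.E} {γ : Fin 3} :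
    G.uncolored (Function.update c e (some γ)) = G.uncolored c \ {e} := by
  ext g
  simp only [uncolored, Set.mem_setOf_eq, Set.mem_diff, Set.mem_singleton_iff]
  by_cases hg : g = e
  · subst hg; simp
  · rw [Function.update_of_ne hg]; tauto

lemma aux_improve {c c' : G.E → Option (Fin 3)}
    (hmin : ∀ c'', G.ProperPartial c'' → (G.uncolored c).ncard ≤ (G.uncolored c'').ncard)
    (hc' : G.ProperPartial c') {e : G.E} (he : e ∈ G.uncolored c)
    (hunc : G.uncolored c' = G.uncolored c \ {e}) : False := by
  have hlt : (G.uncolored c \ {e}).ncard < (G.uncolored c).ncard :=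
    Set.ncard_diff_singleton_lt_of_mem he (G.uncolored c).toFinite
  have h2 := hmin c' hc'
  rw [hunc] at h2
  omega

lemma aux_no_common {c : G.E → Option (Fin 3)} (hc : G.ProperPartial c)
    (hmin : ∀ c'', G.ProperPartial c'' → (G.uncolored c).ncard ≤ (G.uncolored c'').ncard)
    {e : G.E} (he : c e = none) {x y : G.V} (hxy : G.ends e = s(x, y)) {γ : Fin 3}
    (hx : ∀ g, x ∈ G.ends g → c g ≠ some γ) (hy : ∀ g, y ∈ G.ends g → c g ≠ some γ) :
    False := by
  have hprop : G.ProperPartial (Function.update c e (some γ)) := by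
    apply aux_proper_update_some hc
    intro g' hadj
    obtain ⟨hne, z, hz1, hz2⟩ := hadj
    rw [hxy, Sym2.mem_iff] at hz1
    rcases hz1 with rfl | rfl
    · exact hx g' hz2
    · exact hy g' hz2
  exact aux_improve hmin hprop he aux_uncolored_update_some

lemma aux_missing_exists (hdeg : ∀ v : G.V, G.degree v ≤ 3) {c : G.E → Option (Fin 3)}
    {x : G.V} {e : G.E} (hx : x ∈ G.ends e) (he : c e = none) :
    ∃ γ : Fin 3, ∀ g, x ∈ G.ends g → c g ≠ some γ := by
  by_contra hcon
  push_neg at hcon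
  obtain ⟨g0, hg0x, hg0⟩ := hcon 0
  obtain ⟨g1, hg1x, hg1⟩ := hcon 1
  obtain ⟨g2, hg2x, hg2⟩ := hcon 2
  have hne : ∀ (g : G.E) (γ : Fin 3), c g = some γ → e ≠ g := by
    intro g γ hg heq
    rw [← heq, he] at hg
    cases hg
  have h01 : g0 ≠ g1 := fun h => by
    rw [h] at hg0
    exact absurd (Option.some.inj (hg0.symm.trans hg1)) (by decide)
  have h02 : g0 ≠ g2 := fun h => by
    rw [h] at hg0
    exact absurd (Option.some.inj (hg0.symm.trans hg2)) (by decide)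
  have h12 : g1 ≠ g2 := fun h => by
    rw [h] at hg1
    exact absurd (Option.some.inj (hg1.symm.trans hg2)) (by decide)
  exact aux_four hdeg x (hne g0 0 hg0) (hne g1 1 hg1) (hne g2 2 hg2) h01 h02 h12
    hx hg0x hg1x hg2x

lemma aux_two_missing (hdeg : ∀ v : G.V, G.degree v ≤ 3) {c : G.E → Option (Fin 3)}
    (hc : G.ProperPartial c) {x : G.V} {e f : G.E} (hef : e ≠ f)
    (hxe : x ∈ G.ends e) (hxf : x ∈ G.ends f) (he : c e = none) (hf : c f = none) :
    ∃ γ₁ γ₂ : Fin 3, γ₁ ≠ γ₂ ∧ (∀ g, x ∈ G.ends g → c g ≠ some γ₁) ∧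
      (∀ g, x ∈ G.ends g → c g ≠ some γ₂) := by
  by_cases hg : ∃ g δ, x ∈ G.ends g ∧ c g = some δ
  · obtain ⟨g, δ, hgx, hgδ⟩ := hg
    have hge : e ≠ g := fun h => by rw [← h, he] at hgδ; cases hgδ
    have hgf : f ≠ g := fun h => by rw [← h, hf] at hgδ; cases hgδ
    have huniq : ∀ g', x ∈ G.ends g' → ∀ δ', c g' = some δ' → δ' = δ := by
      intro g' hg'x δ' hg'
      by_cases hgg : g' = g
      · subst hgg; exact Option.some.inj (hg'.symm.trans hgδ)
      · exfalso
        have hge' : e ≠ g' := fun h => by rw [← h, he] at hg'; cases hg'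
        have hgf' : f ≠ g' := fun h => by rw [← h, hf] at hg'; cases hg'
        exact aux_four hdeg x hef hge hge' hgf hgf' (Ne.symm hgg) hxe hxf hgx hg'x
    have h3 : ∃ γ₁ γ₂ : Fin 3, γ₁ ≠ γ₂ ∧ γ₁ ≠ δ ∧ γ₂ ≠ δ := by
      clear huniq hgδ
      revert δ; decide
    obtain ⟨γ₁, γ₂, hne, h1, h2⟩ := h3
    exact ⟨γ₁, γ₂, hne, fun g' hg'x hcg' => h1 (huniq g' hg'x γ₁ hcg'),
      fun g' hg'x hcg' => h2 (huniq g' hg'x γ₂ hcg')⟩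
  · push_neg at hg
    exact ⟨0, 1, by decide, fun g' hg'x => hg g' 0 hg'x, fun g' hg'x => hg g' 1 hg'x⟩

lemma aux_matching (hl : G.Loopless) (hdeg : ∀ v : G.V, G.degree v ≤ 3)
    (c : G.E → Option (Fin 3)) (hc : G.ProperPartial c)
    (hmin : ∀ c', G.ProperPartial c' → (G.uncolored c).ncard ≤ (G.uncolored c').ncard) :
    G.IsMatching (G.uncolored c) := by
  intro e he f hf hef hshared
  obtain ⟨v, hve, hvf⟩ := hshared
  have he' : c e = none := he
  have hf' : c f = none := hf
  set u := Sym2.Mem.other' hve with hu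
  set w := Sym2.Mem.other' hvf with hw
  have hendse : G.ends e = s(v, u) := (Sym2.other_spec' hve).symm
  have hendsf : G.ends f = s(v, w) := (Sym2.other_spec' hvf).symm
  have hue : u ∈ G.ends e := by rw [hendse, Sym2.mem_iff]; tauto
  have hwf : w ∈ G.ends f := by rw [hendsf, Sym2.mem_iff]; tauto
  have huv : u ≠ v := by
    intro h
    apply hl e
    rw [hendse, h]
    exact Sym2.mk_isDiag_iff.mpr rfl
  have hwv : w ≠ v := by
    intro h
    apply hl f
    rw [hendsf, h]
    exact Sym2.mk_isDiag_iff.mpr rfl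
  obtain ⟨γ₁, γ₂, h12, hm1, hm2⟩ := aux_two_missing hdeg hc hef hve hvf he' hf'
  have hnu1 : ¬∀ g, u ∈ G.ends g → c g ≠ some γ₁ := fun h => aux_no_common hc hmin he' hendse hm1 h
  have hnu2 : ¬∀ g, u ∈ G.ends g → c g ≠ some γ₂ := fun h => aux_no_common hc hmin he' hendse hm2 h
  by_cases huw : u = w
  · -- parallel edges: two missing at u as well
    obtain ⟨δ₁, δ₂, hd12, hn1, hn2⟩ :=
      aux_two_missing hdeg hc hef hue (by rw [huw]; exact hwf) he' hf'
    have hcommon : δ₁ = γ₁ ∨ δ₁ = γ₂ ∨ δ₂ = γ₁ ∨ δ₂ = γ₂ := by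
      have key : ∀ a b c' d : Fin 3, a ≠ b → c' ≠ d → (c' = a ∨ c' = b ∨ d = a ∨ d = b) := by
        decide
      exact key γ₁ γ₂ δ₁ δ₂ h12 hd12
    rcases hcommon with h | h | h | h
    · exact aux_no_common hc hmin he' hendse (h ▸ hm1) hn1
    · exact aux_no_common hc hmin he' hendse (h ▸ hm2) hn1
    · exact aux_no_common hc hmin he' hendse (h ▸ hm1) hn2
    · exact aux_no_common hc hmin he' hendse (h ▸ hm2) hn2
  · -- u ≠ w
    have hnw1 : ¬∀ g, w ∈ G.ends g → c g ≠ some γ₁ :=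
      fun h => aux_no_common hc hmin hf' hendsf hm1 h
    obtain ⟨β, hβu⟩ := aux_missing_exists hdeg hue he'
    have hβ1 : β ≠ γ₁ := fun h => hnu1 (h ▸ hβu)
    have hβ2 : β ≠ γ₂ := fun h => hnu2 (h ▸ hβu)
    obtain ⟨β', hβ'w⟩ := aux_missing_exists hdeg hwf hf'
    have hβ'1 : β' ≠ γ₁ := fun h => (fun hh => aux_no_common hc hmin hf' hendsf hm1 hh) (h ▸ hβ'w)
    have hβ'2 : β' ≠ γ₂ := fun h => (fun hh => aux_no_common hc hmin hf' hendsf hm2 hh) (h ▸ hβ'w)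
    have hββ' : β' = β := by
      have key : ∀ (a b x y : Fin 3), a ≠ b → x ≠ a → x ≠ b → y ≠ a → y ≠ b → y = x := by decide
      exact key γ₁ γ₂ β β' h12 hβ1 hβ2 hβ'1 hβ'2
    rw [hββ'] at hβ'w
    clear hββ' hβ'1 hβ'2
    -- get the three specific edges
    have hgv' : ¬∀ g, v ∈ G.ends g → c g ≠ some β :=
      fun h => aux_no_common hc hmin he' hendse h hβu
    push_neg at hgv' hnu1 hnw1
    obtain ⟨gv, hgvm, hgvc⟩ := hgv'
    obtain ⟨gu, hgum, hguc⟩ := hnu1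
    obtain ⟨gw, hgwm, hgwc⟩ := hnw1
    -- uniqueness of D-edges at the three vertices
    have hDu : ∀ g, aux_D c γ₁ β g → u ∈ G.ends g → g = gu := by
      intro g hD hg
      rcases hD with h | h
      · exact aux_color_unique hc hg hgum h hguc
      · exact absurd h (hβu g hg)
    have hDv : ∀ g, aux_D c γ₁ β g → v ∈ G.ends g → g = gv := by
      intro g hD hg
      rcases hD with h | h
      · exact absurd h (hm1 g hg)
      · exact aux_color_unique hc hg hgvm h hgvc
    have hDw : ∀ g, aux_D c γ₁ β g → w ∈ G.ends g → g = gw := by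
      intro g hD hg
      rcases hD with h | h
      · exact aux_color_unique hc hg hgwm h hgwc
      · exact absurd h (hβ'w g hg)
    -- components
    set Ku : Set G.E :=
      {g | Relation.ReflTransGen (aux_rel G c γ₁ β) gu g ∧ aux_D c γ₁ β g} with hKudef
    set Kw : Set G.E :=
      {g | Relation.ReflTransGen (aux_rel G c γ₁ β) gw g ∧ aux_D c γ₁ β g} with hKwdef
    have hKuD : ∀ g ∈ Ku, c g = some γ₁ ∨ c g = some β := fun g hg => hg.2
    have hKwD : ∀ g ∈ Kw, c g = some γ₁ ∨ c g = some β := fun g hg => hg.2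
    have hKucl : ∀ g ∈ Ku, ∀ g', G.EdgeAdj g g' → (c g' = some γ₁ ∨ c g' = some β) → g' ∈ Ku :=
      fun g hg g' hadj hD' => ⟨hg.1.tail ⟨hg.2, hD', hadj⟩, hD'⟩
    have hKwcl : ∀ g ∈ Kw, ∀ g', G.EdgeAdj g g' → (c g' = some γ₁ ∨ c g' = some β) → g' ∈ Kw :=
      fun g hg g' hadj hD' => ⟨hg.1.tail ⟨hg.2, hD', hadj⟩, hD'⟩
    have hguKu : gu ∈ Ku := ⟨Relation.ReflTransGen.refl, Or.inl hguc⟩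
    have hgwKw : gw ∈ Kw := ⟨Relation.ReflTransGen.refl, Or.inl hgwc⟩
    by_cases hgvKu : gv ∈ Ku
    · by_cases hgvKw : gv ∈ Kw
      · -- both: three endpoints on one trail
        have hreachb : Relation.ReflTransGen (aux_rel G c γ₁ β) gu gv := hgvKu.1
        have hreachd : Relation.ReflTransGen (aux_rel G c γ₁ β) gu gw :=
          hreachb.trans (by haveI : Std.Symm (aux_rel G c γ₁ β) := ⟨aux_rel_symm⟩; exact Std.Symm.symm _ _ hgvKw.1)
        exact aux_trail hc (Ne.symm hβ1) u v w (fun h => huv h) huw (fun h => hwv h.symm)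
          gu gv gw hguc hgvc hgwc hgum hgvm hgwm hDu hDv hDw hreachb hreachd
      · -- swap Kw, color f with γ₁
        obtain ⟨c1, hKprop, hKunc, hKin, hKout⟩ := aux_swap_proper hc γ₁ β Kw hKwD hKwcl
        have hprop2 : G.ProperPartial (Function.update c1 f (some γ₁)) := by
          apply aux_proper_update_some hKprop
          intro g' hadj
          obtain ⟨hne, z, hz1, hz2⟩ := hadj
          rw [hendsf, Sym2.mem_iff] at hz1
          rcases hz1 with rfl | rfl
          · by_cases hK : g' ∈ Kw
            · exact absurd ((hDv g' hK.2 hz2) ▸ hK) hgvKw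
            · rw [hKout g' hK]; exact hm1 g' hz2
          · by_cases hK : g' ∈ Kw
            · have hg'gw : g' = gw := hDw g' hK.2 hz2
              rw [hKin g' hK, hg'gw, hgwc]
              simp only [swapc, if_pos rfl]
              exact fun hcon => hβ1 (Option.some.inj hcon)
            · rw [hKout g' hK]
              intro hcg'
              exact hK ((hDw g' (Or.inl hcg') hz2) ▸ hgwKw)
        apply aux_improve hmin hprop2 hf
        rw [aux_uncolored_update_some, hKunc]
    · -- swap Ku, color e with γ₁
      obtain ⟨c1, hKprop, hKunc, hKin, hKout⟩ := aux_swap_proper hc γ₁ β Ku hKuD hKucl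
      have hprop2 : G.ProperPartial (Function.update c1 e (some γ₁)) := by
        apply aux_proper_update_some hKprop
        intro g' hadj
        obtain ⟨hne, z, hz1, hz2⟩ := hadj
        rw [hendse, Sym2.mem_iff] at hz1
        rcases hz1 with rfl | rfl
        · by_cases hK : g' ∈ Ku
          · exact absurd ((hDv g' hK.2 hz2) ▸ hK) hgvKu
          · rw [hKout g' hK]; exact hm1 g' hz2
        · by_cases hK : g' ∈ Ku
          · have hg'gu : g' = gu := hDu g' hK.2 hz2
            rw [hKin g' hK, hg'gu, hguc]
            simp only [swapc, if_pos rfl]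
            exact fun hcon => hβ1 (Option.some.inj hcon)
          · rw [hKout g' hK]
            intro hcg'
            exact hK ((hDu g' (Or.inl hcg') hz2) ▸ hguKu)
      apply aux_improve hmin hprop2 he
      rw [aux_uncolored_update_some, hKunc]

end Part1

end Multigraph
namespace Multigraph

lemma aux_pat_ne {α β : Fin 3} (hαβ : α ≠ β) {i j : ℕ} (h : i % 2 ≠ j % 2) :
    (if i % 2 = 1 then α else β) ≠ (if j % 2 = 1 then α else β) := by
  rcases Nat.mod_two_eq_zero_or_one i with h1 | h1 <;>
    rcases Nat.mod_two_eq_zero_or_one j with h2 | h2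
  · rw [h1, h2] at h; exact absurd rfl h
  · rw [if_neg (by omega), if_pos h2]; exact hαβ.symm
  · rw [if_pos h1, if_neg (by omega)]; exact hαβ
  · rw [h1, h2] at h; exact absurd rfl h

lemma aux_pat_congr {α β : Fin 3} {i j : ℕ} (h : i % 2 = j % 2) :
    (if i % 2 = 1 then α else β) = (if j % 2 = 1 then α else β) := by rw [h]

section Rotate

variable {G : Multigraph}

lemma aux_rotate {c : G.E → Option (Fin 3)} (hprop : G.ProperPartial c)
    (n : ℕ) (p : ℕ → G.V) (q : ℕ → G.E) (h3 : 3 ≤ n)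
    (hends : ∀ i, i < n → G.ends (q i) = s(p i, p ((i + 1) % n)))
    (hpinj : ∀ i j, i < n → j < n → p i = p j → i = j)
    (α β : Fin 3) (hαβ : α ≠ β) (m : ℕ) (hm : m < n)
    (hq0 : c (q 0) = none)
    (hcol : ∀ i, 1 ≤ i → i ≤ m → c (q i) = some (if i % 2 = 1 then α else β))
    (hp0 : ∀ g, p 0 ∈ G.ends g → c g ≠ some α)
    (hp1 : ∀ g, p 1 ∈ G.ends g → c g ≠ some β) :
    ∃ c', G.ProperPartial c' ∧ c' (q m) = none ∧
      (∀ g, (∀ i, i ≤ m → g ≠ q i) → c' g = c g) ∧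
      G.uncolored c' = insert (q m) (G.uncolored c \ {q 0}) := by
  have hqinj : ∀ i j, i < n → j < n → q i = q j → i = j := by
    intro i j hi hj hqe
    have h1 : s(p i, p ((i + 1) % n)) = s(p j, p ((j + 1) % n)) := by
      rw [← hends i hi, ← hends j hj, hqe]
    rw [Sym2.eq_iff] at h1
    rcases h1 with ⟨ha, _⟩ | ⟨ha, hb⟩
    · exact hpinj i j hi hj ha
    · exfalso
      have hj1 : (j + 1) % n < n := Nat.mod_lt _ (by omega)
      have hi1 : (i + 1) % n < n := Nat.mod_lt _ (by omega)
      have e1 : i = (j + 1) % n := hpinj i _ hi hj1 ha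
      have e2 : (i + 1) % n = j := hpinj _ j hi1 hj hb
      rcases Nat.lt_or_ge (j + 1) n with h | h
      · rw [Nat.mod_eq_of_lt h] at e1
        subst e1
        rcases Nat.lt_or_ge (j + 1 + 1) n with h' | h'
        · rw [Nat.mod_eq_of_lt h'] at e2; omega
        · have hn : j + 1 + 1 = n := by omega
          rw [hn, Nat.mod_self] at e2
          omega
      · have hj1n : j + 1 = n := by omega
        rw [hj1n, Nat.mod_self] at e1
        subst e1
        rw [Nat.mod_eq_of_lt (by omega : 0 + 1 < n)] at e2
        omega
  have hF4 : ∀ k j, k < n → j < n → p k ∈ G.ends (q j) → j = k ∨ (j + 1) % n = k := by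
    intro k j hk hj hmem
    rw [hends j hj, Sym2.mem_iff] at hmem
    rcases hmem with h | h
    · exact Or.inl (hpinj j k hj hk h.symm)
    · exact Or.inr (hpinj _ k (Nat.mod_lt _ (by omega)) hk h.symm)
  suffices hsuff : ∀ m', m' < n →
      (∀ i, 1 ≤ i → i ≤ m' → c (q i) = some (if i % 2 = 1 then α else β)) →
      ∃ c', G.ProperPartial c' ∧ c' (q m') = none ∧
        (∀ i, i < m' → c' (q i) = some (if (i + 1) % 2 = 1 then α else β)) ∧
        (∀ g, (∀ i, i ≤ m' → g ≠ q i) → c' g = c g) ∧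
        G.uncolored c' = insert (q m') (G.uncolored c \ {q 0}) by
    obtain ⟨c', h1, h2, _, h4, h5⟩ := hsuff m hm hcol
    exact ⟨c', h1, h2, h4, h5⟩
  intro m'
  induction m' with
  | zero =>
    intro _ _
    refine ⟨c, hprop, hq0, fun i hi => absurd hi (Nat.not_lt_zero i), fun g _ => rfl, ?_⟩
    rw [Set.insert_diff_singleton]
    exact (Set.insert_eq_self.mpr (show q 0 ∈ G.uncolored c from hq0)).symm
  | succ k ih =>
    intro hk1n hcolk
    have hkn : k < n := by omega
    obtain ⟨ck, hckprop, hckhole, hckpat, hckout, hckunc⟩ :=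
      ih hkn (fun i h1 h2 => hcolk i h1 (by omega))
    have hk1 : (k + 1) % n = k + 1 := Nat.mod_eq_of_lt hk1n
    have hqkne : q k ≠ q (k + 1) := fun h => by have := hqinj k (k + 1) hkn hk1n h; omega
    have hqk1col : c (q (k + 1)) = some (if (k + 1) % 2 = 1 then α else β) :=
      hcolk (k + 1) (by omega) le_rfl
    refine ⟨Function.update (Function.update ck (q (k + 1)) none) (q k)
      (some (if (k + 1) % 2 = 1 then α else β)), ?_, ?_, ?_, ?_, ?_⟩
    · -- properness
      apply aux_proper_update_some (aux_proper_update_none hckprop (q (k + 1)))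
      intro g' hadj
      obtain ⟨hne, z, hz1, hz2⟩ := hadj
      by_cases hgq : g' = q (k + 1)
      · subst hgq; rw [Function.update_self]; simp
      · rw [Function.update_of_ne hgq]
        rw [hends k hkn, hk1, Sym2.mem_iff] at hz1
        by_cases hcyc : ∃ j, j < n ∧ g' = q j
        · obtain ⟨j, hj, rfl⟩ := hcyc
          rcases hz1 with rfl | rfl
          · -- z = p k
            have hF := hF4 k j hkn hj hz2
            rcases hF with rfl | hjk
            · exact absurd rfl hne
            · rcases Nat.lt_or_ge (j + 1) n with hlt | hge
              · rw [Nat.mod_eq_of_lt hlt] at hjk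
                -- j + 1 = k
                rw [hckpat j (by omega)]
                intro hcon
                exact aux_pat_ne hαβ (by omega : (j + 1) % 2 ≠ (k + 1) % 2)
                  (Option.some.inj hcon)
              · have hj1n : j + 1 = n := by omega
                rw [hj1n, Nat.mod_self] at hjk
                have hout : ck (q j) = c (q j) := hckout (q j) (fun i hi hqe => by
                  have := hqinj j i hj (by omega) hqe; omega)
                rw [hout]
                have hk0 : k = 0 := hjk.symm
                subst hk0
                have := hp0 (q j) hz2
                simpa using this
          · -- z = p (k + 1)
            have hF := hF4 (k + 1) j hk1n hj hz2
            rcases hF with rfl | hjk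
            · exact absurd rfl (fun h => hgq h.symm)
            · rcases Nat.lt_or_ge (j + 1) n with hlt | hge
              · rw [Nat.mod_eq_of_lt hlt] at hjk
                have : j = k := by omega
                subst this
                exact absurd rfl hne
              · have hj1n : j + 1 = n := by omega
                rw [hj1n, Nat.mod_self] at hjk
                omega
        · -- g' not a cycle edge
          have hout : ck g' = c g' := hckout g' (fun i hi hqe => hcyc ⟨i, by omega, hqe⟩)
          rw [hout]
          rcases hz1 with rfl | rfl
          · -- z = p k
            by_cases hk0 : k = 0
            · subst hk0
              have := hp0 g' hz2
              simpa using this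
            · by_cases hk1' : k = 1
              · subst hk1'
                have := hp1 g' hz2
                simpa using this
              · -- k ≥ 2
                have hadjk : G.EdgeAdj (q k) g' := ⟨hne, p k, by
                  rw [hends k hkn, Sym2.mem_iff]; tauto, hz2⟩
                have h1 := hprop (q k) g' hadjk _ (hcolk k (by omega) (by omega))
                have hadjk1 : G.EdgeAdj (q (k - 1)) g' := by
                  refine ⟨fun h => hcyc ⟨k - 1, by omega, h.symm⟩, p k, ?_, hz2⟩
                  rw [hends (k - 1) (by omega), Sym2.mem_iff]
                  right
                  have : (k - 1 + 1) % n = k := by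
                    rw [Nat.sub_add_cancel (by omega)]; exact Nat.mod_eq_of_lt hkn
                  rw [this]
                have h2 := hprop (q (k - 1)) g' hadjk1 _
                  (hcolk (k - 1) (by omega) (by omega))
                have hpp : (if (k + 1) % 2 = 1 then α else β) =
                    (if (k - 1) % 2 = 1 then α else β) := aux_pat_congr (by omega)
                rw [hpp]
                exact h2
          · -- z = p (k + 1)
            have hadjk1 : G.EdgeAdj (q (k + 1)) g' := ⟨fun h => hgq h.symm, p (k + 1), by
              rw [hends (k + 1) hk1n, Sym2.mem_iff]; tauto, hz2⟩
            exact hprop (q (k + 1)) g' hadjk1 _ hqk1col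
    · -- hole
      rw [Function.update_of_ne (Ne.symm hqkne), Function.update_self]
    · -- pattern
      intro i hi
      by_cases hik : i = k
      · subst hik
        rw [Function.update_self]
      · have hi' : i < k := by omega
        have hne1 : q i ≠ q k := fun h => by
          have := hqinj i k (by omega) hkn h; omega
        have hne2 : q i ≠ q (k + 1) := fun h => by
          have := hqinj i (k + 1) (by omega) hk1n h; omega
        rw [Function.update_of_ne hne1, Function.update_of_ne hne2]
        exact hckpat i hi'
    · -- outside
      intro g hg
      rw [Function.update_of_ne (hg k (by omega)), Function.update_of_ne (hg (k + 1) le_rfl)]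
      exact hckout g (fun i hi => hg i (by omega))
    · -- uncolored
      ext g
      simp only [uncolored, Set.mem_setOf_eq, Set.mem_insert_iff, Set.mem_diff,
        Set.mem_singleton_iff]
      by_cases hg1 : g = q k
      · subst hg1
        rw [Function.update_self]
        constructor
        · intro h; cases h
        · rintro (h | ⟨h, h2⟩)
          · exact absurd h hqkne
          · by_cases hk0 : k = 0
            · subst hk0; exact absurd rfl h2
            · rw [hcolk k (by omega) (by omega)] at h; cases h
      · by_cases hg2 : g = q (k + 1)
        · subst hg2
          rw [Function.update_of_ne (Ne.symm hqkne), Function.update_self]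
          simp
        · rw [Function.update_of_ne hg1, Function.update_of_ne hg2]
          have hiff := Set.ext_iff.mp hckunc g
          simp only [uncolored, Set.mem_setOf_eq, Set.mem_insert_iff, Set.mem_diff,
            Set.mem_singleton_iff] at hiff
          constructor
          · intro h
            rcases hiff.mp h with h' | h'
            · exact absurd h' hg1
            · exact Or.inr h'
          · rintro (h' | h')
            · exact absurd h' hg2
            · exact hiff.mpr (Or.inr h')

end Rotate

end Multigraph
namespace Multigraph

lemma aux_periodic_mod {X : Sort*} {f : ℕ → X} {n : ℕ} (hn : 0 < n)
    (hf : ∀ i, f (i + n) = f i) : ∀ i, f i = f (i % n) := by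
  intro i
  induction i using Nat.strong_induction_on with
  | _ i ih =>
    by_cases h : i < n
    · rw [Nat.mod_eq_of_lt h]
    · have hle : n ≤ i := by omega
      calc f i = f (i - n + n) := by rw [Nat.sub_add_cancel hle]
        _ = f (i - n) := hf _
        _ = f ((i - n) % n) := ih _ (by omega)
        _ = f (i % n) := by rw [← Nat.mod_eq_sub_mod hle]

section Common

variable {G : Multigraph}

lemma aux_qinj {n : ℕ} {p : ℕ → G.V} {q : ℕ → G.E} (h3 : 3 ≤ n)
    (hends : ∀ i, i < n → G.ends (q i) = s(p i, p ((i + 1) % n)))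
    (hpinj : ∀ i j, i < n → j < n → p i = p j → i = j) :
    ∀ i j, i < n → j < n → q i = q j → i = j := by
  intro i j hi hj hqe
  have h1 : s(p i, p ((i + 1) % n)) = s(p j, p ((j + 1) % n)) := by
    rw [← hends i hi, ← hends j hj, hqe]
  rw [Sym2.eq_iff] at h1
  rcases h1 with ⟨ha, _⟩ | ⟨ha, hb⟩
  · exact hpinj i j hi hj ha
  · exfalso
    have hj1 : (j + 1) % n < n := Nat.mod_lt _ (by omega)
    have hi1 : (i + 1) % n < n := Nat.mod_lt _ (by omega)
    have e1 : i = (j + 1) % n := hpinj i _ hi hj1 ha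
    have e2 : (i + 1) % n = j := hpinj _ j hi1 hj hb
    rcases Nat.lt_or_ge (j + 1) n with h | h
    · rw [Nat.mod_eq_of_lt h] at e1
      subst e1
      rcases Nat.lt_or_ge (j + 1 + 1) n with h' | h'
      · rw [Nat.mod_eq_of_lt h'] at e2; omega
      · have hn : j + 1 + 1 = n := by omega
        rw [hn, Nat.mod_self] at e2
        omega
    · have hj1n : j + 1 = n := by omega
      rw [hj1n, Nat.mod_self] at e1
      subst e1
      rw [Nat.mod_eq_of_lt (by omega : 0 + 1 < n)] at e2
      omega

lemma aux_common_edge (hdeg : ∀ v : G.V, G.degree v ≤ 3)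
    {n₁ : ℕ} {p₁ : ℕ → G.V} {q₁ : ℕ → G.E} (h3₁ : 3 ≤ n₁)
    (hends₁ : ∀ i, i < n₁ → G.ends (q₁ i) = s(p₁ i, p₁ ((i + 1) % n₁)))
    (hpinj₁ : ∀ i j, i < n₁ → j < n₁ → p₁ i = p₁ j → i = j)
    {n₂ : ℕ} {p₂ : ℕ → G.V} {q₂ : ℕ → G.E} (h3₂ : 3 ≤ n₂)
    (hends₂ : ∀ i, i < n₂ → G.ends (q₂ i) = s(p₂ i, p₂ ((i + 1) % n₂)))
    (hpinj₂ : ∀ i j, i < n₂ → j < n₂ → p₂ i = p₂ j → i = j)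
    {k j : ℕ} (hk : k < n₁) (hj : j < n₂) (hshare : p₁ k = p₂ j) :
    ∃ a b, a < n₁ ∧ b < n₂ ∧ (a = k ∨ (a + 1) % n₁ = k) ∧ q₁ a = q₂ b := by
  by_contra hcon
  push_neg at hcon
  obtain ⟨a0, ha0lt, ha0k, ha0ne⟩ : ∃ a0, a0 < n₁ ∧ (a0 + 1) % n₁ = k ∧ a0 ≠ k := by
    by_cases h : k = 0
    · refine ⟨n₁ - 1, by omega, ?_, by omega⟩
      rw [Nat.sub_add_cancel (by omega), Nat.mod_self, h]
    · refine ⟨k - 1, by omega, ?_, by omega⟩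
      rw [Nat.sub_add_cancel (by omega), Nat.mod_eq_of_lt hk]
  obtain ⟨b0, hb0lt, hb0j, hb0ne⟩ : ∃ b0, b0 < n₂ ∧ (b0 + 1) % n₂ = j ∧ b0 ≠ j := by
    by_cases h : j = 0
    · refine ⟨n₂ - 1, by omega, ?_, by omega⟩
      rw [Nat.sub_add_cancel (by omega), Nat.mod_self, h]
    · refine ⟨j - 1, by omega, ?_, by omega⟩
      rw [Nat.sub_add_cancel (by omega), Nat.mod_eq_of_lt hj]
  have hqinj₁ := aux_qinj h3₁ hends₁ hpinj₁
  have hqinj₂ := aux_qinj h3₂ hends₂ hpinj₂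
  have hm1 : p₁ k ∈ G.ends (q₁ k) := by rw [hends₁ k hk, Sym2.mem_iff]; left; rfl
  have hm0 : p₁ k ∈ G.ends (q₁ a0) := by
    rw [hends₁ a0 ha0lt, Sym2.mem_iff]; right; rw [ha0k]
  have hm1' : p₁ k ∈ G.ends (q₂ j) := by
    rw [hshare, hends₂ j hj, Sym2.mem_iff]; left; rfl
  have hm0' : p₁ k ∈ G.ends (q₂ b0) := by
    rw [hshare, hends₂ b0 hb0lt, Sym2.mem_iff]; right; rw [hb0j]
  exact aux_four hdeg (p₁ k)
    (fun h => ha0ne (hqinj₁ a0 k ha0lt hk h))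
    (hcon a0 b0 ha0lt hb0lt (Or.inr ha0k))
    (hcon a0 j ha0lt hj (Or.inr ha0k))
    (hcon k b0 hk hb0lt (Or.inl rfl))
    (hcon k j hk hj (Or.inl rfl))
    (fun h => hb0ne (hqinj₂ b0 j hb0lt hj h))
    hm0 hm1 hm0' hm1'

end Common

end Multigraph
/-- in a graph of maximum degree at most 3 with a partial proper
3-edge-coloring minimizing the number of uncolored edges, the uncolored edges
form a matching and the odd Kempe cycles corresponding to distinct uncolored
edges are pairwise vertex-disjoint. -/
theorem minimal_partial_coloring_matching_and_disjoint_cycles (G : Multigraph)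
    (hl : G.Loopless) (hdeg : ∀ v : G.V, G.degree v ≤ 3)
    (c : G.E → Option (Fin 3)) (hc : G.ProperPartial c)
    (hmin : ∀ c' : G.E → Option (Fin 3), G.ProperPartial c' →
      (G.uncolored c).ncard ≤ (G.uncolored c').ncard) :
    G.IsMatching (G.uncolored c) ∧
    ∀ e₁ e₂ : G.E, e₁ ∈ G.uncolored c → e₂ ∈ G.uncolored c → e₁ ≠ e₂ →
      ∀ (n₁ : ℕ) (p₁ : ℕ → G.V) (q₁ : ℕ → G.E) (α₁ β₁ : Fin 3)
        (n₂ : ℕ) (p₂ : ℕ → G.V) (q₂ : ℕ → G.E) (α₂ β₂ : Fin 3),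
        G.IsKempeCycle c e₁ n₁ p₁ q₁ α₁ β₁ →
        G.IsKempeCycle c e₂ n₂ p₂ q₂ α₂ β₂ →
        ∀ i j : ℕ, p₁ i ≠ p₂ j := by
  refine ⟨Multigraph.aux_matching hl hdeg c hc hmin, ?_⟩
  intro e₁ e₂ he₁ he₂ hne n₁ p₁ q₁ α₁ β₁ n₂ p₂ q₂ α₂ β₂ hK₁ hK₂ i j hshare0
  obtain ⟨⟨h3₁, hpinj₁, hpper₁, hqper₁, hendsA₁⟩, hodd₁, hq0₁, hnone₁, hab₁, hcol₁,
    hmiss1₁, hmiss0₁⟩ := hK₁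
  obtain ⟨⟨h3₂, hpinj₂, hpper₂, hqper₂, hendsA₂⟩, hodd₂, hq0₂, hnone₂, hab₂, hcol₂,
    hmiss1₂, hmiss0₂⟩ := hK₂
  -- normalized ends
  have hends₁' : ∀ i', i' < n₁ → G.ends (q₁ i') = s(p₁ i', p₁ ((i' + 1) % n₁)) := by
    intro i' _
    rw [hendsA₁ i', Multigraph.aux_periodic_mod (show 0 < n₁ by omega) hpper₁ (i' + 1)]
  have hends₂' : ∀ i', i' < n₂ → G.ends (q₂ i') = s(p₂ i', p₂ ((i' + 1) % n₂)) := by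
    intro i' _
    rw [hendsA₂ i', Multigraph.aux_periodic_mod (show 0 < n₂ by omega) hpper₂ (i' + 1)]
  have hqinj₁ := Multigraph.aux_qinj h3₁ hends₁' hpinj₁
  -- normalize shared vertex indices
  have hk : i % n₁ < n₁ := Nat.mod_lt _ (by omega)
  have hjn : j % n₂ < n₂ := Nat.mod_lt _ (by omega)
  have hshare : p₁ (i % n₁) = p₂ (j % n₂) := by
    rw [← Multigraph.aux_periodic_mod (show 0 < n₁ by omega) hpper₁ i,
      ← Multigraph.aux_periodic_mod (show 0 < n₂ by omega) hpper₂ j]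
    exact hshare0
  -- a common colored edge
  obtain ⟨a, b, ha, hb, _, hq⟩ := Multigraph.aux_common_edge hdeg h3₁ hends₁' hpinj₁
    h3₂ hends₂' hpinj₂ hk hjn hshare
  have hposidx : ∀ a' b', a' < n₁ → b' < n₂ → q₁ a' = q₂ b' → 1 ≤ a' ∧ 1 ≤ b' := by
    intro a' b' ha' hb' hq'
    constructor
    · rcases Nat.eq_zero_or_pos a' with rfl | h
      · rw [hq0₁] at hq'
        rcases Nat.eq_zero_or_pos b' with rfl | hb1
        · rw [hq0₂] at hq'; exact absurd hq' hne
        · exfalso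
          have hcb := hcol₂ b' hb1 hb'
          rw [← hq', hnone₁] at hcb; cases hcb
      · exact h
    · rcases Nat.eq_zero_or_pos b' with rfl | h
      · exfalso
        rw [hq0₂] at hq'
        rcases Nat.eq_zero_or_pos a' with rfl | ha1
        · rw [hq0₁] at hq'; exact absurd hq' hne
        · have hca := hcol₁ a' ha1 ha'
          rw [hq', hnone₂] at hca; cases hca
      · exact h
  obtain ⟨ha1, hb1⟩ := hposidx a b ha hb hq
  -- step A : rotate the hole of C₂ onto a chosen edge
  have stepA : ∀ t, 1 ≤ t → t < n₂ → ∃ cA, G.ProperPartial cA ∧ cA (q₂ t) = none ∧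
      (∀ g, (∀ i', i' ≤ t → g ≠ q₂ i') → cA g = c g) ∧
      G.uncolored cA = insert (q₂ t) (G.uncolored c \ {q₂ 0}) := by
    intro t ht1 ht2
    exact Multigraph.aux_rotate hc n₂ p₂ q₂ h3₂ hends₂' hpinj₂ α₂ β₂ hab₂ t ht2
      (by rw [hq0₂]; exact hnone₂)
      (fun i' h1 h2 => hcol₂ i' h1 (by omega)) hmiss0₂ hmiss1₂
  have hncardA : ∀ t, 1 ≤ t → t < n₂ →
      (insert (q₂ t) (G.uncolored c \ {q₂ 0})).ncard = (G.uncolored c).ncard := by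
    intro t ht1 ht2
    apply Multigraph.aux_ncard_swap
    · show c (q₂ 0) = none
      rw [hq0₂]; exact hnone₂
    · show ¬ c (q₂ t) = none
      rw [hcol₂ t ht1 ht2]; simp
  -- final contradiction maker: two adjacent uncolored edges in a minimizing coloring
  have finish : ∀ cc : G.E → Option (Fin 3), G.ProperPartial cc →
      (G.uncolored cc).ncard = (G.uncolored c).ncard →
      ∀ g g' : G.E, cc g = none → cc g' = none → g ≠ g' →
      ∀ z : G.V, z ∈ G.ends g → z ∈ G.ends g' → False := by
    intro cc hccp hccn g g' hg hg' hgg' z hz hz'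
    have hccmin : ∀ c'', G.ProperPartial c'' →
        (G.uncolored cc).ncard ≤ (G.uncolored c'').ncard :=
      fun c'' hc'' => by rw [hccn]; exact hmin c'' hc''
    exact Multigraph.aux_matching hl hdeg cc hccp hccmin g hg g' hg' hgg' ⟨z, hz, hz'⟩
  -- e₁ is never an edge of the (rotated part of) second cycle
  have he₁notC₂ : ∀ i', i' < n₂ → e₁ ≠ q₂ i' := by
    intro i' hi' hqe
    rcases Nat.eq_zero_or_pos i' with rfl | h
    · rw [hq0₂] at hqe; exact hne hqe
    · have hcb := hcol₂ i' h hi'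
      rw [← hqe, hnone₁] at hcb; cases hcb
  by_cases hlast : ∃ b', 1 ≤ b' ∧ b' < n₂ ∧ q₁ (n₁ - 1) = q₂ b'
  · -- the common edge is incident to p₁ 0 : immediately adjacent holes
    obtain ⟨t, ht1, ht2, hqt⟩ := hlast
    obtain ⟨hatc, hcAp, hcAhole, hcAout, hcAunc⟩ := stepA t ht1 ht2
    have he₁unch : hatc e₁ = c e₁ := hcAout e₁ (fun i' hi' => he₁notC₂ i' (by omega))
    have hcAe₁ : hatc e₁ = none := by rw [he₁unch]; exact hnone₁
    have hne2 : e₁ ≠ q₂ t := he₁notC₂ t ht2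
    have hz1 : p₁ 0 ∈ G.ends e₁ := by
      rw [← hq0₁, hends₁' 0 (by omega), Sym2.mem_iff]; left; rfl
    have hz2 : p₁ 0 ∈ G.ends (q₂ t) := by
      rw [← hqt, hends₁' (n₁ - 1) (by omega), Sym2.mem_iff]; right
      have hmm : (n₁ - 1 + 1) % n₁ = 0 := by
        rw [Nat.sub_add_cancel (by omega), Nat.mod_self]
      rw [hmm]
    exact finish hatc hcAp (by rw [hcAunc]; exact hncardA t ht1 ht2) e₁ (q₂ t) hcAe₁ hcAhole
      hne2 (p₁ 0) hz1 hz2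
  · -- choose the first common edge along C₁
    have hSex : ∃ a', (1 ≤ a' ∧ a' < n₁ ∧ ∃ b', 1 ≤ b' ∧ b' < n₂ ∧ q₁ a' = q₂ b') :=
      ⟨a, ha1, ha, b, hb1, hb, hq⟩
    obtain ⟨hs1, hsn, t, ht1, ht2, hqs⟩ := Nat.find_spec hSex
    set s := Nat.find hSex with hsdef
    have hsmin : ∀ k', k' < s → ¬(1 ≤ k' ∧ k' < n₁ ∧ ∃ b', 1 ≤ b' ∧ b' < n₂ ∧ q₁ k' = q₂ b') :=
      fun k' hk' => Nat.find_min hSex hk'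
    obtain ⟨hatc, hcAp, hcAhole, hcAout, hcAunc⟩ := stepA t ht1 ht2
    have he₁unch : hatc e₁ = c e₁ := hcAout e₁ (fun i' hi' => he₁notC₂ i' (by omega))
    have hcAncard : (G.uncolored hatc).ncard = (G.uncolored c).ncard := by
      rw [hcAunc]; exact hncardA t ht1 ht2
    by_cases hs1' : s = 1
    · -- holes e₁ and q₂ t adjacent at p₁ 1
      rw [hs1'] at hqs
      have hcAe₁ : hatc e₁ = none := by rw [he₁unch]; exact hnone₁
      have hne2 : e₁ ≠ q₂ t := he₁notC₂ t ht2
      have hz1 : p₁ 1 ∈ G.ends e₁ := by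
        rw [← hq0₁, hends₁' 0 (by omega), Sym2.mem_iff]; right
        rw [Nat.mod_eq_of_lt (by omega : 0 + 1 < n₁)]
      have hz2 : p₁ 1 ∈ G.ends (q₂ t) := by
        rw [← hqs, hends₁' 1 (by omega), Sym2.mem_iff]; left; rfl
      exact finish hatc hcAp hcAncard e₁ (q₂ t) hcAe₁ hcAhole hne2 (p₁ 1) hz1 hz2
    · -- s ≥ 2 : rotate the hole of C₁ up to position s - 1
      have hs2 : 2 ≤ s := by omega
      -- no vertex p₁ k' with k' < s lies on C₂
      have hNV : ∀ k', k' < s → ∀ jj, jj < n₂ → p₁ k' ≠ p₂ jj := by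
        intro k' hk' jj hjj hpk
        obtain ⟨a', b', ha', hb', hak, hq'⟩ := Multigraph.aux_common_edge hdeg h3₁ hends₁'
          hpinj₁ h3₂ hends₂' hpinj₂ (show k' < n₁ by omega) hjj hpk
        obtain ⟨ha1', hb1'⟩ := hposidx a' b' ha' hb' hq'
        rcases hak with rfl | hak
        · exact hsmin a' (by omega) ⟨ha1', ha', b', hb1', hb', hq'⟩
        · rcases Nat.lt_or_ge (a' + 1) n₁ with hlt | hge
          · rw [Nat.mod_eq_of_lt hlt] at hak
            exact hsmin a' (by omega) ⟨ha1', ha', b', hb1', hb', hq'⟩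
          · have ha'n : a' = n₁ - 1 := by omega
            exact hlast ⟨b', hb1', hb', by rw [← ha'n]; exact hq'⟩
      -- edges at the vertices p₁ k' (k' < s) are unchanged by step A
      have hunch : ∀ k', k' < s → ∀ g, p₁ k' ∈ G.ends g → hatc g = c g := by
        intro k' hk' g hg
        apply hcAout
        intro i' hi' hqe
        subst hqe
        rw [hends₂' i' (by omega), Sym2.mem_iff] at hg
        rcases hg with h | h
        · exact hNV k' hk' i' (by omega) h
        · exact hNV k' hk' ((i' + 1) % n₂) (Nat.mod_lt _ (by omega)) h
      -- rotate C₁'s hole to position s - 1 (under hatc)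
      obtain ⟨c', hc'p, hc'hole, hc'out, hc'unc⟩ :=
        Multigraph.aux_rotate hcAp n₁ p₁ q₁ h3₁ hends₁' hpinj₁ α₁ β₁ hab₁ (s - 1) (by omega)
          (by rw [hq0₁, he₁unch]; exact hnone₁)
          (by intro i' h1 h2
              have hmem : p₁ i' ∈ G.ends (q₁ i') := by
                rw [hends₁' i' (by omega), Sym2.mem_iff]; left; rfl
              rw [hunch i' (by omega) (q₁ i') hmem]
              exact hcol₁ i' h1 (by omega))
          (by intro g hg
              rw [hunch 0 (by omega) g hg]
              exact hmiss0₁ g hg)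
          (by intro g hg
              rw [hunch 1 (by omega) g hg]
              exact hmiss1₁ g hg)
      -- c' has holes at q₁ (s-1) and q₁ s, adjacent at p₁ s
      have hq1s : c' (q₁ s) = none := by
        rw [hc'out (q₁ s) (fun i' hi' hqe => by
          have := hqinj₁ s i' hsn (by omega) hqe; omega), hqs]
        exact hcAhole
      have hne3 : q₁ (s - 1) ≠ q₁ s := fun h => by
        have := hqinj₁ (s - 1) s (by omega) hsn h; omega
      have hz1 : p₁ s ∈ G.ends (q₁ (s - 1)) := by
        rw [hends₁' (s - 1) (by omega), Sym2.mem_iff]; right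
        have hmm : (s - 1 + 1) % n₁ = s := by
          rw [Nat.sub_add_cancel (by omega), Nat.mod_eq_of_lt hsn]
        rw [hmm]
      have hz2 : p₁ s ∈ G.ends (q₁ s) := by
        rw [hends₁' s hsn, Sym2.mem_iff]; left; rfl
      have hncard1 : (G.uncolored c').ncard = (G.uncolored hatc).ncard := by
        rw [hc'unc]
        apply Multigraph.aux_ncard_swap
        · show hatc (q₁ 0) = none
          rw [hq0₁, he₁unch]; exact hnone₁
        · show ¬ hatc (q₁ (s - 1)) = none
          have hmem : p₁ (s - 1) ∈ G.ends (q₁ (s - 1)) := by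
            rw [hends₁' (s - 1) (by omega), Sym2.mem_iff]; left; rfl
          rw [hunch (s - 1) (by omega) (q₁ (s - 1)) hmem,
            hcol₁ (s - 1) (by omega) (by omega)]
          simp
      exact finish c' hc'p (hncard1.trans hcAncard) (q₁ (s - 1)) (q₁ s) hc'hole hq1s hne3
        (p₁ s) hz1 hz2
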